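/- arXiv:2309.02733 — 2 statements merged into one kernel-verified Lean document; each statement's English description precedes it below -/
import Mathlib

section
/- Let Φ ∈ ℝ^{n×n}, G ∈ ℝ^{n×q}, Ξ ∈ ℝ^{l×n}, and let A = [[Φ, G],[0, I_q]], C = [Ξ 0]. Then the vertical stack of C, CA, CA², ..., CA^{n-1} equals the block matrix [O Ī·O·G], where O is the vertical stack of Ξ, ΞΦ, ..., ΞΦ^{n-1}, and Ī = L ⊗ I_l with L the n×n strictly lower triangular all-ones matrix (L_{ij} = 1 if i > j, else 0). -/
open Matrix Finset

lemma pow_blocks (n q : ℕ) (Φ : Matrix (Fin n) (Fin n) ℝ)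
    (G : Matrix (Fin n) (Fin q) ℝ) (k : ℕ) :
    (Matrix.fromBlocks Φ G (0 : Matrix (Fin q) (Fin n) ℝ) (1 : Matrix (Fin q) (Fin q) ℝ)) ^ k =
      Matrix.fromBlocks (Φ ^ k) ((∑ i ∈ Finset.range k, Φ ^ i) * G) 0 1 := by
  induction k with
  | zero => simp [Matrix.fromBlocks_one]
  | succ k ih =>
      rw [pow_succ, ih, Matrix.fromBlocks_multiply]
      simp only [Matrix.mul_zero, Matrix.mul_one, Matrix.zero_mul, Matrix.one_mul,
        add_zero, zero_add, Finset.sum_range_succ, add_mul]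
      rw [add_comm (Φ ^ k * G), pow_succ, Matrix.add_mul]

/-- The observability matrix of the augmented system (vertical stack of
`C·A^i`, `i = 0,…,n-1`) equals `[O  Ī·O·G]`, where `O` is the observability
matrix of the original system and `Ī = L ⊗ I_l`. -/
theorem stmt_11 (n l q : ℕ) (Φ : Matrix (Fin n) (Fin n) ℝ)
    (G : Matrix (Fin n) (Fin q) ℝ) (Ξ : Matrix (Fin l) (Fin n) ℝ)
    (A : Matrix (Fin n ⊕ Fin q) (Fin n ⊕ Fin q) ℝ)
    (hA : A = Matrix.fromBlocks Φ G (0 : Matrix (Fin q) (Fin n) ℝ)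
      (1 : Matrix (Fin q) (Fin q) ℝ))
    (C : Matrix (Fin l) (Fin n ⊕ Fin q) ℝ)
    (hC : C = Matrix.fromCols Ξ (0 : Matrix (Fin l) (Fin q) ℝ))
    (O : Matrix (Fin n × Fin l) (Fin n) ℝ)
    (hO : O = Matrix.of fun p j => (Ξ * Φ ^ (p.1 : ℕ)) p.2 j)
    (L : Matrix (Fin n) (Fin n) ℝ)
    (hL : L = Matrix.of fun i j => if j < i then (1 : ℝ) else 0)
    (Ibar : Matrix (Fin n × Fin l) (Fin n × Fin l) ℝ)
    (hI : Ibar = Matrix.kroneckerMap (· * ·) L (1 : Matrix (Fin l) (Fin l) ℝ)) :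
    (Matrix.of fun (p : Fin n × Fin l) j => (C * A ^ (p.1 : ℕ)) p.2 j) =
      Matrix.fromCols O (Ibar * O * G) := by
  subst hA hC hO hL hI
  ext ⟨i, m⟩ j
  simp only [Matrix.of_apply, pow_blocks, Matrix.fromCols_mul_fromBlocks,
    Matrix.zero_mul, Matrix.mul_zero, Matrix.mul_one, add_zero, zero_add]
  cases j with
  | inl j =>
      simp [Matrix.fromCols]
  | inr j =>
      simp only [Matrix.fromCols, Matrix.of_apply, Sum.elim_inr,
        Matrix.mul_apply, Matrix.kroneckerMap_apply]
      -- LHS: (Ξ * ((∑ Φ^i)*G)) m j ; RHS: ∑ ...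
      have hsum : ∀ x : Fin n,
          (∑ p : Fin n × Fin l, (if p.1 < i then (1:ℝ) else 0) *
              (1 : Matrix (Fin l) (Fin l) ℝ) m p.2 *
              ∑ jj : Fin n, Ξ p.2 jj * (Φ ^ (p.1 : ℕ)) jj x)
          = ∑ t ∈ Finset.range (i : ℕ), ∑ jj : Fin n, Ξ m jj * (Φ ^ t) jj x := by
        intro x
        rw [Fintype.sum_prod_type]
        simp only [Matrix.one_apply, mul_ite, mul_one, mul_zero, ite_mul, zero_mul,
          one_mul, Finset.sum_ite_eq, Finset.mem_univ, if_true, Fin.lt_def]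
        rw [Fin.sum_univ_eq_sum_range
          (fun k => if (k : ℕ) < (i : ℕ) then ∑ jj : Fin n, Ξ m jj * (Φ ^ k) jj x else 0)]
        rw [← Finset.sum_filter]
        congr 1
        ext k
        simp only [Finset.mem_filter, Finset.mem_range]
        omega
      simp only [hsum]
      simp only [Matrix.sum_apply, Finset.sum_mul, Finset.mul_sum, mul_assoc]
      rw [Finset.sum_comm]
      exact Finset.sum_congr rfl fun y _ => Finset.sum_comm
end

section
/- Let Z₁ = Z(G₁, c₁, A₁, b₁, h₁) ⊆ ℝⁿ be a constrained zonotope and let M ∈ ℝ^{m×n}, u ∈ ℝᵐ (with m ≤ n handled via M applied to Z₁), and Z₂ = Z(G₂, c₂, A₂, b₂, h₂) ⊆ ℝⁿ. Then the set M·Z₁ + u ⊕ Z₂ (Minkowski sum of the affine image of Z₁ and Z₂) equals the constrained zonotope Z([M·G₁ G₂], M·c₁ + u + c₂, diag(A₁, A₂), (b₁; b₂), (h₁; h₂)). -/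
open scoped Pointwise

open scoped ENNReal

/-- The set described by a constrained zonotope `Z(G, c, A, b, h)`. -/
def czSet {N NG NC : Type*} [Fintype N] [Fintype NG] [Fintype NC]
    (G : Matrix N NG ℝ) (c : N → ℝ) (A : Matrix NC NG ℝ) (b : NC → ℝ)
    (h : NG → ℝ≥0∞) : Set (N → ℝ) :=
  {x | ∃ ξ : NG → ℝ, x = G.mulVec ξ + c ∧ A.mulVec ξ = b ∧
    ∀ j, ENNReal.ofReal |ξ j| ≤ h j}

/-- Prediction step: the Minkowski sum of an affine image `M·Z₁ + u` of a
constrained zonotope and a constrained zonotope `Z₂` is again a constrained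
zonotope, with generators `[M·G₁  G₂]`, center `M·c₁ + u + c₂`, block-diagonal
constraints, and concatenated constraint/bound vectors. -/
theorem stmt_18 (n m ng₁ nc₁ ng₂ nc₂ : ℕ)
    (G₁ : Matrix (Fin n) (Fin ng₁) ℝ) (c₁ : Fin n → ℝ)
    (A₁ : Matrix (Fin nc₁) (Fin ng₁) ℝ) (b₁ : Fin nc₁ → ℝ) (h₁ : Fin ng₁ → ℝ≥0∞)
    (M : Matrix (Fin m) (Fin n) ℝ) (u : Fin m → ℝ)
    (G₂ : Matrix (Fin m) (Fin ng₂) ℝ) (c₂ : Fin m → ℝ)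
    (A₂ : Matrix (Fin nc₂) (Fin ng₂) ℝ) (b₂ : Fin nc₂ → ℝ) (h₂ : Fin ng₂ → ℝ≥0∞) :
    (fun x => M.mulVec x + u) '' czSet G₁ c₁ A₁ b₁ h₁ + czSet G₂ c₂ A₂ b₂ h₂ =
      czSet (Matrix.fromCols (M * G₁) G₂) (M.mulVec c₁ + u + c₂)
        (Matrix.fromBlocks A₁ 0 0 A₂) (Sum.elim b₁ b₂) (Sum.elim h₁ h₂) := by
  ext x
  constructor
  · rintro ⟨y, ⟨z, ⟨ξ₁, rfl, hA1, hh1⟩, rfl⟩, w, ⟨ξ₂, rfl, hA2, hh2⟩, rfl⟩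
    refine ⟨Sum.elim ξ₁ ξ₂, ?_, ?_, ?_⟩
    · simp [Matrix.mulVec_add, Matrix.mulVec_mulVec]
      abel
    · funext i
      cases i <;>
        simp [Matrix.fromBlocks_mulVec, hA1, hA2]
    · rintro (j | j)
      · simpa using hh1 j
      · simpa using hh2 j
  · rintro ⟨ξ, rfl, hA, hh⟩
    refine ⟨M.mulVec (G₁.mulVec (ξ ∘ Sum.inl) + c₁) + u,
      ⟨_, ⟨ξ ∘ Sum.inl, rfl, ?_, fun j => hh (Sum.inl j)⟩, rfl⟩,
      G₂.mulVec (ξ ∘ Sum.inr) + c₂,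
      ⟨ξ ∘ Sum.inr, rfl, ?_, fun j => hh (Sum.inr j)⟩, ?_⟩
    · funext i
      have := congrFun hA (Sum.inl i)
      simpa [Matrix.fromBlocks_mulVec] using this
    · funext i
      have := congrFun hA (Sum.inr i)
      simpa [Matrix.fromBlocks_mulVec] using this
    · have key : ((M * G₁).fromCols G₂).mulVec ξ =
          (M * G₁).mulVec (ξ ∘ Sum.inl) + G₂.mulVec (ξ ∘ Sum.inr) := by
        have : ξ = Sum.elim (ξ ∘ Sum.inl) (ξ ∘ Sum.inr) := by
          funext i; cases i <;> rfl
        conv_lhs => rw [this]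
        exact Matrix.fromCols_mulVec_sumElim _ _ _ _
      rw [key]
      simp [Matrix.mulVec_add, Matrix.mulVec_mulVec]
      abel
end
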